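/- The subset LO(G) ⊆ CO(G) consisting of circular orders induced by left-invariant linear orders is a closed subset of CO(G). -/

import Mathlib

/-- A circular order (as a set) on `G`: a cocycle `c : G³ → {-1,0,1}`
vanishing exactly on degenerate triples and satisfying the 2-cocycle identity. -/
def IsCircularOrder {G : Type*} (c : G → G → G → ℤ) : Prop :=
  (∀ x y z : G, c x y z = -1 ∨ c x y z = 0 ∨ c x y z = 1) ∧
  (∀ x y z : G, c x y z = 0 ↔ (x = y ∨ y = z ∨ x = z)) ∧
  (∀ g₀ g₁ g₂ g₃ : G, c g₁ g₂ g₃ - c g₀ g₂ g₃ + c g₀ g₁ g₃ - c g₀ g₁ g₂ = 0)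

/-- Invariance of a circular order under left multiplication. -/
def IsLeftInvariant {G : Type*} [Group G] (c : G → G → G → ℤ) : Prop :=
  ∀ g x y z : G, c (g * x) (g * y) (g * z) = c x y z

/-- A left-invariant linear order on a group `G`: a strict total order
invariant under left multiplication. -/
def IsLeftInvariantLinearOrder {G : Type*} [Group G] (lt : G → G → Prop) : Prop :=
  IsStrictTotalOrder G lt ∧ ∀ f a b : G, lt a b → lt (f * a) (f * b)

section AuxClosed

variable {G : Type*} [Group G]

/-- Any condition depending on the values of `c` at four (fixed) triples is a
closed condition in the product topology. -/
lemma isClosed_fourEval (p q r s : G × G × G) (Q : ℤ → ℤ → ℤ → ℤ → Prop) :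
    IsClosed {c : {c : G → G → G → ℤ // IsCircularOrder c ∧ IsLeftInvariant c} |
      Q (c.val p.1 p.2.1 p.2.2) (c.val q.1 q.2.1 q.2.2)
        (c.val r.1 r.2.1 r.2.2) (c.val s.1 s.2.1 s.2.2)} := by
  have hc : ∀ t : G × G × G,
      Continuous (fun c : {c : G → G → G → ℤ // IsCircularOrder c ∧ IsLeftInvariant c} =>
        c.val t.1 t.2.1 t.2.2) := by
    intro t
    exact (continuous_apply t.2.2).comp ((continuous_apply t.2.1).comp
      ((continuous_apply t.1).comp continuous_subtype_val))
  have hcont : Continuous (fun c : {c : G → G → G → ℤ // IsCircularOrder c ∧ IsLeftInvariant c} =>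
      ((c.val p.1 p.2.1 p.2.2, c.val q.1 q.2.1 q.2.2, c.val r.1 r.2.1 r.2.2,
        c.val s.1 s.2.1 s.2.2) : ℤ × ℤ × ℤ × ℤ)) :=
    Continuous.prodMk (hc p) (Continuous.prodMk (hc q) (Continuous.prodMk (hc r) (hc s)))
  exact (isClosed_discrete {v : ℤ × ℤ × ℤ × ℤ | Q v.1 v.2.1 v.2.2.1 v.2.2.2}).preimage hcont

end AuxClosed

/-- The subspace `LO(G) ⊆ CO(G)` of circular orders induced by left-invariant
linear orders is closed in `CO(G)`. -/
theorem linearOrders_isClosed_in_circularOrders {G : Type*} [Group G] :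
    IsClosed {c : {c : G → G → G → ℤ // IsCircularOrder c ∧ IsLeftInvariant c} |
      ∃ lt : G → G → Prop, IsLeftInvariantLinearOrder lt ∧
        ∀ x y z : G, c.val x y z = 1 ↔
          ((lt x y ∧ lt y z) ∨ (lt y z ∧ lt z x) ∨ (lt z x ∧ lt x y))} := by
  classical
  have key : {c : {c : G → G → G → ℤ // IsCircularOrder c ∧ IsLeftInvariant c} |
      ∃ lt : G → G → Prop, IsLeftInvariantLinearOrder lt ∧
        ∀ x y z : G, c.val x y z = 1 ↔
          ((lt x y ∧ lt y z) ∨ (lt y z ∧ lt z x) ∨ (lt z x ∧ lt x y))} =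
      ((⋂ (a : G), ⋂ (b : G),
        {c : {c : G → G → G → ℤ // IsCircularOrder c ∧ IsLeftInvariant c} |
          c.val a⁻¹ 1 a = 1 → c.val b⁻¹ 1 b = 1 → c.val (a*b)⁻¹ 1 (a*b) = 1}) ∩
      (⋂ (a : G),
        {c : {c : G → G → G → ℤ // IsCircularOrder c ∧ IsLeftInvariant c} |
          a = 1 ∨ c.val a⁻¹ 1 a = 1 ∨ c.val a 1 a⁻¹ = 1})) ∩
      (⋂ (x : G), ⋂ (y : G), ⋂ (z : G),
        {c : {c : G → G → G → ℤ // IsCircularOrder c ∧ IsLeftInvariant c} |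
          c.val x y z = 1 ↔
            ((c.val (x⁻¹*y)⁻¹ 1 (x⁻¹*y) = 1 ∧ c.val (y⁻¹*z)⁻¹ 1 (y⁻¹*z) = 1) ∨
             (c.val (y⁻¹*z)⁻¹ 1 (y⁻¹*z) = 1 ∧ c.val (z⁻¹*x)⁻¹ 1 (z⁻¹*x) = 1) ∨
             (c.val (z⁻¹*x)⁻¹ 1 (z⁻¹*x) = 1 ∧ c.val (x⁻¹*y)⁻¹ 1 (x⁻¹*y) = 1))}) := by
    ext c
    simp only [Set.mem_setOf_eq, Set.mem_inter_iff, Set.mem_iInter]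
    constructor
    · rintro ⟨lt, ⟨hsto, hinv⟩, hiff⟩
      -- positivity at the identity is `lt 1 g`
      have hpos : ∀ g : G, (c.val g⁻¹ 1 g = 1) ↔ lt 1 g := by
        intro g
        rw [hiff]
        constructor
        · rintro (⟨h1, h2⟩ | ⟨h1, h2⟩ | ⟨h1, h2⟩)
          · exact h2
          · exact h1
          · have := hinv g g⁻¹ 1 h2
            simpa using this
        · intro h
          refine Or.inl ⟨?_, h⟩
          have := hinv g⁻¹ 1 g h
          simpa using this
      have hlt : ∀ a b : G, (c.val (a⁻¹*b)⁻¹ 1 (a⁻¹*b) = 1) ↔ lt a b := by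
        intro a b
        rw [hpos]
        constructor
        · intro h
          have := hinv a 1 (a⁻¹*b) h
          simpa [mul_assoc] using this
        · intro h
          have := hinv a⁻¹ a b h
          simpa using this
      refine ⟨⟨?_, ?_⟩, ?_⟩
      · intro a b ha hb
        rw [hpos] at ha hb ⊢
        have h1 : lt a (a*b) := by
          have := hinv a 1 b hb
          simpa using this
        exact hsto.trans 1 a (a*b) ha h1
      · intro a
        rcases (show lt 1 a ∨ 1 = a ∨ lt a 1 by have := hsto.trichotomous 1 a; tauto) with h | h | h
        · exact Or.inr (Or.inl ((hpos a).mpr h))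
        · exact Or.inl h.symm
        · refine Or.inr (Or.inr ?_)
          have hp := hpos a⁻¹
          rw [inv_inv] at hp
          rw [hp]
          have := hinv a⁻¹ a 1 h
          simpa using this
      · intro x y z
        rw [hiff x y z, hlt x y, hlt y z, hlt z x]
    · rintro ⟨⟨hA, hB⟩, hC⟩
      refine ⟨fun a b => c.val (a⁻¹*b)⁻¹ 1 (a⁻¹*b) = 1, ⟨?_, ?_⟩, ?_⟩
      · have h₁ : ∀ a b : G, (c.val (a⁻¹*b)⁻¹ 1 (a⁻¹*b) = 1) ∨ a = b ∨
            (c.val (b⁻¹*a)⁻¹ 1 (b⁻¹*a) = 1) := by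
          intro a b
          rcases eq_or_ne a b with h | h
          · exact Or.inr (Or.inl h)
          · rcases hB (a⁻¹*b) with h0 | h1 | h2
            · exact absurd (by rwa [inv_mul_eq_one] at h0) h
            · exact Or.inl h1
            · refine Or.inr (Or.inr ?_)
              show c.val (b⁻¹*a)⁻¹ 1 (b⁻¹*a) = 1
              have e1 : (b⁻¹*a)⁻¹ = a⁻¹*b := by group
              have e2 : (b⁻¹*a) = (a⁻¹*b)⁻¹ := by group
              rw [e1, e2]
              exact h2
        have h₂ : ∀ a : G, ¬ (c.val (a⁻¹*a)⁻¹ 1 (a⁻¹*a) = 1) := by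
          intro a h
          simp only [inv_mul_cancel, inv_one] at h
          have h0 := (c.prop.1.2.1 (1:G) 1 1).mpr (Or.inl rfl)
          rw [h0] at h
          exact absurd h (by norm_num)
        have h₃ : ∀ a b d : G, (c.val (a⁻¹*b)⁻¹ 1 (a⁻¹*b) = 1) →
            (c.val (b⁻¹*d)⁻¹ 1 (b⁻¹*d) = 1) → (c.val (a⁻¹*d)⁻¹ 1 (a⁻¹*d) = 1) := by
          intro a b d hab hbd
          have := hA (a⁻¹*b) (b⁻¹*d) hab hbd
          have e : (a⁻¹*b)*(b⁻¹*d) = a⁻¹*d := by group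
          rw [e] at this
          exact this
        exact @IsStrictTotalOrder.mk _ _ ⟨fun a b hn hn' => ((h₁ a b).resolve_left hn).resolve_right hn'⟩ (@IsStrictOrder.mk _ _ ⟨h₂⟩ ⟨h₃⟩)
      · -- left invariance
        intro f a b h
        show c.val ((f*a)⁻¹*(f*b))⁻¹ 1 ((f*a)⁻¹*(f*b)) = 1
        have e : (f*a)⁻¹*(f*b) = a⁻¹*b := by group
        rw [e]
        exact h
      · -- induces c
        intro x y z
        exact hC x y z
  rw [key]
  refine IsClosed.inter (IsClosed.inter ?_ ?_) ?_
  · refine isClosed_iInter fun a => isClosed_iInter fun b => ?_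
    exact isClosed_fourEval (a⁻¹, 1, a) (b⁻¹, 1, b) ((a*b)⁻¹, 1, a*b) (1, 1, 1)
      (fun v1 v2 v3 _ => v1 = 1 → v2 = 1 → v3 = 1)
  · refine isClosed_iInter fun a => ?_
    exact isClosed_fourEval (a⁻¹, 1, a) (a, 1, a⁻¹) (1, 1, 1) (1, 1, 1)
      (fun v1 v2 _ _ => a = 1 ∨ v1 = 1 ∨ v2 = 1)
  · refine isClosed_iInter fun x => isClosed_iInter fun y => isClosed_iInter fun z => ?_
    exact isClosed_fourEval (x, y, z) ((x⁻¹*y)⁻¹, 1, x⁻¹*y) ((y⁻¹*z)⁻¹, 1, y⁻¹*z)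
      ((z⁻¹*x)⁻¹, 1, z⁻¹*x)
      (fun v0 v1 v2 v3 => v0 = 1 ↔ ((v1 = 1 ∧ v2 = 1) ∨ (v2 = 1 ∧ v3 = 1) ∨ (v3 = 1 ∧ v1 = 1)))
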